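/- Let f(r,u,v) = (vᵀr/‖r‖)u + (uᵀr/‖r‖)v + (uᵀv/‖r‖)r − 5((uᵀr)(vᵀr)/‖r‖³)r. Define c₁(r,f*) = R(r,f*)ᵀ(a_x, a_y, 0)ᵀ and c₂(r,f*) = R(r,f*)ᵀ(b_x, b_y, 0)ᵀ using the rotation R and scalars a_x, a_y, b_x, b_y of the allocation construction. Then for all r ∈ ℝ³\{0} and all f* ∈ ℝ³, f(r, c₁(r,f*), c₂(r,f*)) = f*. That is, any prescribed intersatellite force f* can be exactly realized by the amplitude pair (c₁, c₂). -/

import Mathlib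

open Matrix

noncomputable section

def norm3 (r : Fin 3 → ℝ) : ℝ := Real.sqrt (r ⬝ᵥ r)

def Phi1 (r f : Fin 3 → ℝ) : ℝ :=
  Real.sqrt (norm3 (crossProduct r f) ^ 2 + norm3 r ^ 2 * norm3 f ^ 2)

def Phi2 (r f : Fin 3 → ℝ) : ℝ := (2 - Real.sign (r ⬝ᵥ f) ^ 2) * Phi1 r f

def aX (r f : Fin 3 → ℝ) : ℝ :=
  -(Real.sign (r ⬝ᵥ f) / 2) * Real.sqrt ((|r ⬝ᵥ f| + Phi1 r f) / norm3 r)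

def aY (r f : Fin 3 → ℝ) : ℝ :=
  (1 / Real.sqrt 2) * Real.sqrt ((-|r ⬝ᵥ f| + Phi2 r f) / norm3 r)

def bX (r f : Fin 3 → ℝ) : ℝ :=
  (1 / 2) * Real.sqrt ((|r ⬝ᵥ f| + Phi2 r f) / norm3 r)

def bY (r f : Fin 3 → ℝ) : ℝ :=
  -(Real.sign (r ⬝ᵥ f) / Real.sqrt 2) * Real.sqrt ((-|r ⬝ᵥ f| + Phi1 r f) / norm3 r)

open Classical in
def Rmat (r f : Fin 3 → ℝ) : Matrix (Fin 3) (Fin 3) ℝ :=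
  if crossProduct r f ≠ 0 then
    Matrix.of ![ (1 / norm3 r) • r,
      (1 / (norm3 r * norm3 (crossProduct r f))) • ((r ⬝ᵥ r) • f - (r ⬝ᵥ f) • r),
      (1 / norm3 (crossProduct r f)) • (crossProduct r f) ]
  else
    Matrix.of ![ (1 / norm3 r) • r, 0, 0 ]

def c1 (r f : Fin 3 → ℝ) : Fin 3 → ℝ := (Rmat r f)ᵀ.mulVec ![aX r f, aY r f, 0]

def c2 (r f : Fin 3 → ℝ) : Fin 3 → ℝ := (Rmat r f)ᵀ.mulVec ![bX r f, bY r f, 0]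

def f3 (r u v : Fin 3 → ℝ) : Fin 3 → ℝ :=
  ((v ⬝ᵥ r) / norm3 r) • u + ((u ⬝ᵥ r) / norm3 r) • v + ((u ⬝ᵥ v) / norm3 r) • r
    - (5 * (u ⬝ᵥ r) * (v ⬝ᵥ r) / norm3 r ^ 3) • r

end

section AuxLemmas

lemma dot_self_nonneg3 (r : Fin 3 → ℝ) : 0 ≤ r ⬝ᵥ r := by
  simp only [dotProduct, Fin.sum_univ_three]
  nlinarith [mul_self_nonneg (r 0), mul_self_nonneg (r 1), mul_self_nonneg (r 2)]

lemma norm3_nonneg (r : Fin 3 → ℝ) : 0 ≤ norm3 r := Real.sqrt_nonneg _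

lemma norm3_sq (r : Fin 3 → ℝ) : norm3 r ^ 2 = r ⬝ᵥ r := Real.sq_sqrt (dot_self_nonneg3 r)

lemma norm3_pos (r : Fin 3 → ℝ) (hr : r ≠ 0) : 0 < norm3 r := by
  apply Real.sqrt_pos.2
  have h : r 0 ≠ 0 ∨ r 1 ≠ 0 ∨ r 2 ≠ 0 := by
    by_contra h; push_neg at h
    exact hr (by funext i; fin_cases i <;> simp [h.1, h.2.1, h.2.2])
  simp only [dotProduct, Fin.sum_univ_three]
  rcases h with h | h | h <;> nlinarith [mul_self_nonneg (r 0), mul_self_nonneg (r 1),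
    mul_self_nonneg (r 2), mul_self_pos.2 h]

lemma lagrange (r f : Fin 3 → ℝ) :
    norm3 (crossProduct r f) ^ 2 = norm3 r ^ 2 * norm3 f ^ 2 - (r ⬝ᵥ f) ^ 2 := by
  rw [norm3_sq, norm3_sq, norm3_sq]
  simp only [cross_apply, dotProduct, Fin.sum_univ_three, Matrix.cons_val_zero,
    Matrix.cons_val_one, Matrix.head_cons, Matrix.cons_val_two, Matrix.tail_cons]
  ring

lemma phi1_nonneg (r f : Fin 3 → ℝ) : 0 ≤ Phi1 r f := Real.sqrt_nonneg _

lemma phi1_sq (r f : Fin 3 → ℝ) :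
    Phi1 r f ^ 2 = 2 * norm3 (crossProduct r f) ^ 2 + (r ⬝ᵥ f) ^ 2 := by
  have h : Phi1 r f ^ 2 = norm3 (crossProduct r f) ^ 2 + norm3 r ^ 2 * norm3 f ^ 2 := by
    apply Real.sq_sqrt; positivity
  rw [h, lagrange]; ring

lemma abs_le_phi1 (r f : Fin 3 → ℝ) : |r ⬝ᵥ f| ≤ Phi1 r f := by
  nlinarith [phi1_sq r f, phi1_nonneg r f, abs_nonneg (r ⬝ᵥ f), sq_abs (r ⬝ᵥ f),
    sq_nonneg (norm3 (crossProduct r f))]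

lemma sign_sq_one {β : ℝ} (hb : β ≠ 0) : Real.sign β ^ 2 = 1 := by
  rcases hb.lt_or_gt with h | h
  · rw [Real.sign_of_neg h]; norm_num
  · rw [Real.sign_of_pos h]; norm_num

lemma sign_mul_abs' (β : ℝ) : Real.sign β * |β| = β := by
  rcases lt_trichotomy β 0 with h | h | h
  · rw [Real.sign_of_neg h, abs_of_neg h]; ring
  · simp [h]
  · rw [Real.sign_of_pos h, abs_of_pos h]; ring

lemma scalar1 (r f : Fin 3 → ℝ) (hr : r ≠ 0) :
    aY r f * bY r f - 2 * aX r f * bX r f = (r ⬝ᵥ f) / norm3 r := by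
  have hn := norm3_pos r hr
  have hΦ := phi1_sq r f
  have hΦ0 := phi1_nonneg r f
  have hA := abs_le_phi1 r f
  have hA0 : (0:ℝ) ≤ |r ⬝ᵥ f| := abs_nonneg _
  have h2' : Real.sqrt 2 ^ 2 = 2 := Real.sq_sqrt (by norm_num)
  have h2n : Real.sqrt 2 ≠ 0 := by positivity
  by_cases hb : r ⬝ᵥ f = 0
  · simp only [aX, bY, hb, Real.sign_zero]
    simp [hb]
  · have hs2 : Real.sign (r ⬝ᵥ f) ^ 2 = 1 := sign_sq_one hb
    have hsA : Real.sign (r ⬝ᵥ f) * |r ⬝ᵥ f| = r ⬝ᵥ f := sign_mul_abs' _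
    have h2 : Phi2 r f = Phi1 r f := by rw [Phi2]; rw [hs2]; ring
    simp only [aX, aY, bX, bY, h2]
    set n := norm3 r
    set Φ := Phi1 r f
    set β := r ⬝ᵥ f
    set A := |β|
    set s := Real.sign β
    set c := Real.sqrt 2
    have hP : Real.sqrt ((A + Φ) / n) ^ 2 = (A + Φ) / n :=
      Real.sq_sqrt (div_nonneg (by linarith) hn.le)
    have hQ : Real.sqrt ((-A + Φ) / n) ^ 2 = (-A + Φ) / n :=
      Real.sq_sqrt (div_nonneg (by linarith) hn.le)
    calc (1 / c * Real.sqrt ((-A + Φ) / n)) * (-(s / c) * Real.sqrt ((-A + Φ) / n))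
          - 2 * (-(s / 2) * Real.sqrt ((A + Φ) / n)) * (1 / 2 * Real.sqrt ((A + Φ) / n))
        = -(s * Real.sqrt ((-A + Φ) / n) ^ 2) / c ^ 2
            + s / 2 * Real.sqrt ((A + Φ) / n) ^ 2 := by ring
      _ = β / n := by
          rw [hP, hQ, h2']
          linear_combination (1 / n) * hsA

lemma scalar2 (r f : Fin 3 → ℝ) (hr : r ≠ 0) :
    aX r f * bY r f + aY r f * bX r f = norm3 (crossProduct r f) / norm3 r := by
  have hn := norm3_pos r hr
  have hΦ := phi1_sq r f
  have hΦ0 := phi1_nonneg r f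
  have hA := abs_le_phi1 r f
  have hA0 : (0:ℝ) ≤ |r ⬝ᵥ f| := abs_nonneg _
  have hm0 : 0 ≤ norm3 (crossProduct r f) := norm3_nonneg _
  have h2' : Real.sqrt 2 ^ 2 = 2 := Real.sq_sqrt (by norm_num)
  have h2n : Real.sqrt 2 ≠ 0 := by positivity
  by_cases hb : r ⬝ᵥ f = 0
  · have hΦm : Phi1 r f = Real.sqrt 2 * norm3 (crossProduct r f) := by
      have h1 : Phi1 r f = Real.sqrt (Phi1 r f ^ 2) := (Real.sqrt_sq hΦ0).symm
      rw [h1, show Phi1 r f ^ 2 = (Real.sqrt 2 * norm3 (crossProduct r f)) ^ 2 by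
        rw [hb] at hΦ; linear_combination hΦ - norm3 (crossProduct r f) ^ 2 * h2']
      exact Real.sqrt_sq (by positivity)
    have h2 : Phi2 r f = 2 * Phi1 r f := by
      rw [Phi2, hb, Real.sign_zero]; ring
    have hx : aX r f = 0 := by rw [aX, hb, Real.sign_zero]; ring
    have hy : bY r f = 0 := by rw [bY, hb, Real.sign_zero]; ring
    have harg : (-|r ⬝ᵥ f| + Phi2 r f) / norm3 r = (|r ⬝ᵥ f| + Phi2 r f) / norm3 r := by
      rw [hb, abs_zero]; ring_nf
    have hy' : aY r f = 1 / Real.sqrt 2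
        * Real.sqrt ((|r ⬝ᵥ f| + Phi2 r f) / norm3 r) := by rw [aY, harg]
    rw [hx, hy, hy', bX]
    have hT : Real.sqrt ((|r ⬝ᵥ f| + Phi2 r f) / norm3 r) ^ 2
        = (|r ⬝ᵥ f| + Phi2 r f) / norm3 r :=
      Real.sq_sqrt (div_nonneg (by rw [hb, abs_zero, h2]; linarith) hn.le)
    calc 0 * 0 + 1 / Real.sqrt 2 * Real.sqrt ((|r ⬝ᵥ f| + Phi2 r f) / norm3 r)
            * (1 / 2 * Real.sqrt ((|r ⬝ᵥ f| + Phi2 r f) / norm3 r))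
        = Real.sqrt ((|r ⬝ᵥ f| + Phi2 r f) / norm3 r) ^ 2 / (2 * Real.sqrt 2) := by
          ring
      _ = norm3 (crossProduct r f) / norm3 r := by
          rw [hT, h2, hb, abs_zero, hΦm]
          field_simp
          ring
  · have hs2 : Real.sign (r ⬝ᵥ f) ^ 2 = 1 := sign_sq_one hb
    have h2 : Phi2 r f = Phi1 r f := by rw [Phi2]; rw [hs2]; ring
    simp only [aX, aY, bX, bY, h2]
    set n := norm3 r
    set m := norm3 (crossProduct r f)
    set Φ := Phi1 r f
    set β := r ⬝ᵥ f
    set A := |β|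
    set s := Real.sign β
    set c := Real.sqrt 2
    have hA2 : A ^ 2 = β ^ 2 := sq_abs β
    have hPQ : Real.sqrt ((A + Φ) / n) * Real.sqrt ((-A + Φ) / n) = c * m / n := by
      rw [← Real.sqrt_mul (div_nonneg (by linarith) hn.le)]
      rw [show (A + Φ) / n * ((-A + Φ) / n) = (c * m / n) ^ 2 by
        linear_combination (1 / n ^ 2) * hΦ - (1 / n ^ 2) * hA2 - (m ^ 2 / n ^ 2) * h2']
      exact Real.sqrt_sq (by positivity)
    calc -(s / 2) * Real.sqrt ((A + Φ) / n) * (-(s / c) * Real.sqrt ((-A + Φ) / n))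
          + 1 / c * Real.sqrt ((-A + Φ) / n) * (1 / 2 * Real.sqrt ((A + Φ) / n))
        = (s ^ 2 + 1) / (2 * c)
            * (Real.sqrt ((A + Φ) / n) * Real.sqrt ((-A + Φ) / n)) := by ring
      _ = m / n := by
          rw [hs2, hPQ]
          field_simp
          ring

lemma f3_form (r w : Fin 3 → ℝ) (hr : r ≠ 0) (hw : w ⬝ᵥ r = 0) (a b c d : ℝ) :
    f3 r (a • r + b • w) (c • r + d • w)
      = ((b * d * (w ⬝ᵥ w) - 2 * norm3 r ^ 2 * a * c) / norm3 r) • r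
        + (norm3 r * (a * d + b * c)) • w := by
  have hn := norm3_pos r hr
  have hn' : norm3 r ≠ 0 := ne_of_gt hn
  have hsq := norm3_sq r
  have hwr : r ⬝ᵥ w = 0 := by rw [dotProduct_comm]; exact hw
  unfold f3
  rw [show (a • r + b • w) ⬝ᵥ r = a * norm3 r ^ 2 by
        simp [add_dotProduct, smul_dotProduct, hw, hsq],
      show (c • r + d • w) ⬝ᵥ r = c * norm3 r ^ 2 by
        simp [add_dotProduct, smul_dotProduct, hw, hsq],
      show (a • r + b • w) ⬝ᵥ (c • r + d • w)
          = a * c * norm3 r ^ 2 + b * d * (w ⬝ᵥ w) by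
        simp [add_dotProduct, dotProduct_add, dotProduct_smul, smul_dotProduct, hw, hwr, hsq]
        ring]
  match_scalars <;> field_simp <;> ring

lemma mulvec_pos (r f : Fin 3 → ℝ) (hX : crossProduct r f ≠ 0) (p q : ℝ) :
    (Rmat r f)ᵀ.mulVec ![p, q, 0] = (p / norm3 r) • r
      + q • ((1 / (norm3 r * norm3 (crossProduct r f))) • ((r ⬝ᵥ r) • f - (r ⬝ᵥ f) • r)) := by
  funext i
  simp only [Rmat, if_pos hX, Matrix.mulVec, Matrix.transpose_apply, dotProduct,
    Fin.sum_univ_three, Matrix.of_apply, Matrix.cons_val_zero, Matrix.cons_val_one,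
    Matrix.head_cons, Matrix.cons_val_two, Matrix.tail_cons, Pi.add_apply, Pi.smul_apply,
    Pi.sub_apply, smul_eq_mul]
  ring

lemma mulvec_zero (r f : Fin 3 → ℝ) (hX : ¬ crossProduct r f ≠ 0) (p q : ℝ) :
    (Rmat r f)ᵀ.mulVec ![p, q, 0] = (p / norm3 r) • r + q • (0 : Fin 3 → ℝ) := by
  funext i
  simp only [Rmat, if_neg hX, Matrix.mulVec, Matrix.transpose_apply, dotProduct,
    Fin.sum_univ_three, Matrix.of_apply, Matrix.cons_val_zero, Matrix.cons_val_one,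
    Matrix.head_cons, Matrix.cons_val_two, Matrix.tail_cons, Pi.add_apply, Pi.smul_apply,
    Pi.zero_apply, smul_eq_mul]
  ring

lemma cross_zero_collinear (r f : Fin 3 → ℝ) (h : crossProduct r f = 0) :
    (r ⬝ᵥ r) • f = (r ⬝ᵥ f) • r := by
  have h0 := congrFun h 0
  have h1 := congrFun h 1
  have h2 := congrFun h 2
  simp only [cross_apply, Matrix.cons_val_zero, Matrix.cons_val_one, Matrix.head_cons,
    Matrix.cons_val_two, Matrix.tail_cons, Pi.zero_apply] at h0 h1 h2
  funext i
  fin_cases i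
  · show ((r ⬝ᵥ r) • f) 0 = ((r ⬝ᵥ f) • r) 0
    simp only [Pi.smul_apply, smul_eq_mul, dotProduct, Fin.sum_univ_three]
    linear_combination (-(r 1)) * h2 + r 2 * h1
  · show ((r ⬝ᵥ r) • f) 1 = ((r ⬝ᵥ f) • r) 1
    simp only [Pi.smul_apply, smul_eq_mul, dotProduct, Fin.sum_univ_three]
    linear_combination r 0 * h2 - r 2 * h0
  · show ((r ⬝ᵥ r) • f) 2 = ((r ⬝ᵥ f) • r) 2
    simp only [Pi.smul_apply, smul_eq_mul, dotProduct, Fin.sum_univ_three]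
    linear_combination (-(r 0)) * h1 + r 1 * h0

lemma aY_mul_bY_zero (r f : Fin 3 → ℝ) (hr : r ≠ 0)
    (hm : norm3 (crossProduct r f) = 0) : aY r f * bY r f = 0 := by
  have hΦ := phi1_sq r f
  rw [hm] at hΦ
  have hΦ0 := phi1_nonneg r f
  have hby : bY r f = 0 := by
    by_cases hb : r ⬝ᵥ f = 0
    · rw [bY, hb, Real.sign_zero]; ring
    · have hΦabs : Phi1 r f = |r ⬝ᵥ f| := by
        rw [show Phi1 r f = Real.sqrt (Phi1 r f ^ 2) from (Real.sqrt_sq hΦ0).symm,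
          show Phi1 r f ^ 2 = (r ⬝ᵥ f) ^ 2 by linarith]
        exact Real.sqrt_sq_eq_abs _
      rw [bY, show -|r ⬝ᵥ f| + Phi1 r f = 0 by rw [hΦabs]; ring]
      simp
  rw [hby, mul_zero]

end AuxLemmas

theorem allocation_exact (r f : Fin 3 → ℝ) (hr : r ≠ 0) :
    f3 r (c1 r f) (c2 r f) = f := by
  have hn := norm3_pos r hr
  have hn' : norm3 r ≠ 0 := ne_of_gt hn
  have hsq := norm3_sq r
  have hs1 := scalar1 r f hr
  have hs2 := scalar2 r f hr
  by_cases hX : crossProduct r f ≠ 0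
  · -- nondegenerate case
    set w : Fin 3 → ℝ :=
      (1 / (norm3 r * norm3 (crossProduct r f))) • ((r ⬝ᵥ r) • f - (r ⬝ᵥ f) • r) with hwdef
    have hm : 0 < norm3 (crossProduct r f) := norm3_pos _ hX
    have hm' : norm3 (crossProduct r f) ≠ 0 := ne_of_gt hm
    have hmsq := norm3_sq (crossProduct r f)
    have hfl := lagrange r f
    have hwr : w ⬝ᵥ r = 0 := by
      have hz : ((r ⬝ᵥ r) • f - (r ⬝ᵥ f) • r) ⬝ᵥ r = 0 := by
        simp only [sub_dotProduct, smul_dotProduct, smul_eq_mul, dotProduct_comm f r]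
        ring
      rw [hwdef, smul_dotProduct, hz, smul_eq_mul, mul_zero]
    have hww : w ⬝ᵥ w = 1 := by
      have hdd : ((r ⬝ᵥ r) • f - (r ⬝ᵥ f) • r) ⬝ᵥ ((r ⬝ᵥ r) • f - (r ⬝ᵥ f) • r)
          = (norm3 r * norm3 (crossProduct r f)) ^ 2 := by
        simp only [sub_dotProduct, dotProduct_sub, smul_dotProduct, dotProduct_smul,
          smul_eq_mul, dotProduct_comm f r]
        rw [show r ⬝ᵥ r = norm3 r ^ 2 from hsq.symm,
          show f ⬝ᵥ f = norm3 f ^ 2 from (norm3_sq f).symm]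
        linear_combination (-(norm3 r ^ 2)) * hfl
      rw [hwdef, smul_dotProduct, dotProduct_smul, hdd, smul_eq_mul, smul_eq_mul]
      field_simp
    have hc1 : c1 r f = (aX r f / norm3 r) • r + aY r f • w := mulvec_pos r f hX _ _
    have hc2 : c2 r f = (bX r f / norm3 r) • r + bY r f • w := mulvec_pos r f hX _ _
    rw [hc1, hc2, f3_form r w hr hwr, hww]
    have e1 : (aY r f * bY r f * 1
        - 2 * norm3 r ^ 2 * (aX r f / norm3 r) * (bX r f / norm3 r)) / norm3 r
        = (r ⬝ᵥ f) / norm3 r ^ 2 := by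
      have h2ab : 2 * norm3 r ^ 2 * (aX r f / norm3 r) * (bX r f / norm3 r)
          = 2 * aX r f * bX r f := by
        field_simp
      rw [mul_one, h2ab, hs1, div_div, ← sq]
    have e2 : norm3 r * (aX r f / norm3 r * bY r f + aY r f * (bX r f / norm3 r))
        = norm3 (crossProduct r f) / norm3 r := by
      rw [show norm3 r * (aX r f / norm3 r * bY r f + aY r f * (bX r f / norm3 r))
          = aX r f * bY r f + aY r f * bX r f by field_simp, hs2]
    rw [e1, e2, hwdef]
    rw [show r ⬝ᵥ r = norm3 r ^ 2 from hsq.symm]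
    match_scalars <;> field_simp <;> ring
  · -- degenerate case: cross product vanishes
    push_neg at hX
    have hm : norm3 (crossProduct r f) = 0 := by
      rw [norm3, hX]; simp
    have hcol := cross_zero_collinear r f hX
    have hab0 : aY r f * bY r f = 0 := aY_mul_bY_zero r f hr hm
    have hc1 : c1 r f = (aX r f / norm3 r) • r + aY r f • (0 : Fin 3 → ℝ) :=
      mulvec_zero r f (by simp [hX]) _ _
    have hc2 : c2 r f = (bX r f / norm3 r) • r + bY r f • (0 : Fin 3 → ℝ) :=
      mulvec_zero r f (by simp [hX]) _ _
    rw [hc1, hc2, f3_form r 0 hr (zero_dotProduct r) _ _ _ _]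
    have e1 : (aY r f * bY r f * ((0 : Fin 3 → ℝ) ⬝ᵥ 0)
        - 2 * norm3 r ^ 2 * (aX r f / norm3 r) * (bX r f / norm3 r)) / norm3 r
        = (r ⬝ᵥ f) / norm3 r ^ 2 := by
      have h2ab : 2 * norm3 r ^ 2 * (aX r f / norm3 r) * (bX r f / norm3 r)
          = 2 * aX r f * bX r f := by
        field_simp
      rw [dotProduct_zero, mul_zero, zero_sub, show
          -(2 * norm3 r ^ 2 * (aX r f / norm3 r) * (bX r f / norm3 r))
          = 2 * norm3 r ^ 2 * (aX r f / norm3 r) * (bX r f / norm3 r) * (-1) by ring,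
        h2ab, show 2 * aX r f * bX r f * (-1)
          = (aY r f * bY r f - 2 * aX r f * bX r f) - aY r f * bY r f by ring,
        hs1, hab0, sub_zero, div_div, ← sq]
    rw [e1, smul_zero, add_zero]
    funext i
    have hcoli := congrFun hcol i
    simp only [Pi.smul_apply, smul_eq_mul] at hcoli ⊢
    rw [show r ⬝ᵥ r = norm3 r ^ 2 from hsq.symm] at hcoli
    rw [div_mul_eq_mul_div, div_eq_iff (pow_ne_zero 2 hn')]
    linarith [hcoli]
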